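/- (Theorem 1.) If the final reward ρ_T : Δ(S) → ℝ is convex on Δ(S) and, for every t ∈ {0, …, T−1} and every joint action a ∈ A, the reward b ↦ ρ_t(b, a) is convex on Δ(S), then the value function of any finite-horizon policy graph is convex in the belief: V_T is convex on Δ(S), and for every t ∈ {0, …, T−1} and every node q ∈ Q_t, the function b ↦ V_t(b, q) is convex on Δ(S). -/

import Mathlib

def simplex (S : Type*) [Fintype S] : Set (S → ℝ) :=
  {b | (∀ s, 0 ≤ b s) ∧ ∑ s, b s = 1}

noncomputable def eta {S Z : Type*} [Fintype S] (Ps : S → S → ℝ) (Pz : S → Z → ℝ)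
    (b : S → ℝ) (z : Z) : ℝ :=
  ∑ s', Pz s' z * ∑ s, Ps s s' * b s

noncomputable def zeta {S Z : Type*} [Fintype S] (Ps : S → S → ℝ) (Pz : S → Z → ℝ)
    (b : S → ℝ) (z : Z) : S → ℝ :=
  fun s' => Pz s' z * (∑ s, Ps s s' * b s) / eta Ps Pz b z

section helpers
variable {S Z : Type*} [Fintype S]

lemma convex_simplex : Convex ℝ (simplex S) := by
  intro x hx y hy u v hu hv huv
  refine ⟨fun s => add_nonneg (mul_nonneg hu (hx.1 s)) (mul_nonneg hv (hy.1 s)), ?_⟩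
  simp [Finset.sum_add_distrib, ← Finset.mul_sum, hx.2, hy.2, huv]

lemma eta_smul_add (Ps : S → S → ℝ) (Pz : S → Z → ℝ) (x y : S → ℝ) (u v : ℝ) (z : Z) :
    eta Ps Pz (u • x + v • y) z = u * eta Ps Pz x z + v * eta Ps Pz y z := by
  simp only [eta, Pi.add_apply, Pi.smul_apply, smul_eq_mul]
  rw [Finset.mul_sum, Finset.mul_sum, ← Finset.sum_add_distrib]
  refine Finset.sum_congr rfl fun s' _ => ?_
  have hL : ∑ s, Ps s s' * (u * x s + v * y s) =
      u * ∑ s, Ps s s' * x s + v * ∑ s, Ps s s' * y s := by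
    rw [Finset.mul_sum, Finset.mul_sum, ← Finset.sum_add_distrib]
    exact Finset.sum_congr rfl fun s _ => by ring
  rw [hL]; ring

lemma eta_pos (Ps : S → S → ℝ) (Pz : S → Z → ℝ)
    (hPs0 : ∀ s s', 0 ≤ Ps s s') (hPs1 : ∀ s, ∑ s', Ps s s' = 1)
    (hPz0 : ∀ s' z, 0 < Pz s' z) {b : S → ℝ} (hb : b ∈ simplex S) (z : Z) :
    0 < eta Ps Pz b z := by
  have hm : ∀ s', 0 ≤ ∑ s, Ps s s' * b s := fun s' =>
    Finset.sum_nonneg fun s _ => mul_nonneg (hPs0 s s') (hb.1 s)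
  have hsum : ∑ s', ∑ s, Ps s s' * b s = 1 := by
    rw [Finset.sum_comm]
    have : ∀ s, ∑ s', Ps s s' * b s = b s := by
      intro s; rw [← Finset.sum_mul, hPs1 s, one_mul]
    simp [this, hb.2]
  have : ∃ s' ∈ (Finset.univ : Finset S), 0 < ∑ s, Ps s s' * b s := by
    by_contra h
    push_neg at h
    have : ∑ s', ∑ s, Ps s s' * b s ≤ 0 :=
      Finset.sum_nonpos fun s' hs' => h s' hs'
    linarith
  obtain ⟨s0, _, hs0⟩ := this
  refine Finset.sum_pos' (fun s' _ => mul_nonneg (hPz0 s' z).le (hm s')) ⟨s0, Finset.mem_univ s0, mul_pos (hPz0 s0 z) hs0⟩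

lemma zeta_mem (Ps : S → S → ℝ) (Pz : S → Z → ℝ)
    (hPs0 : ∀ s s', 0 ≤ Ps s s') (hPs1 : ∀ s, ∑ s', Ps s s' = 1)
    (hPz0 : ∀ s' z, 0 < Pz s' z) {b : S → ℝ} (hb : b ∈ simplex S) (z : Z) :
    zeta Ps Pz b z ∈ simplex S := by
  have hη := eta_pos Ps Pz hPs0 hPs1 hPz0 hb z
  constructor
  · intro s'
    exact div_nonneg (mul_nonneg (hPz0 s' z).le
      (Finset.sum_nonneg fun s _ => mul_nonneg (hPs0 s s') (hb.1 s))) hη.le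
  · simp only [zeta]
    rw [← Finset.sum_div, div_eq_one_iff_eq hη.ne']
    rfl

lemma zeta_comb (Ps : S → S → ℝ) (Pz : S → Z → ℝ)
    (hPs0 : ∀ s s', 0 ≤ Ps s s') (hPs1 : ∀ s, ∑ s', Ps s s' = 1)
    (hPz0 : ∀ s' z, 0 < Pz s' z) {x y : S → ℝ} (hx : x ∈ simplex S) (hy : y ∈ simplex S)
    {u v : ℝ} (hu : 0 ≤ u) (hv : 0 ≤ v) (huv : u + v = 1) (z : Z) :
    zeta Ps Pz (u • x + v • y) z =
      ((u * eta Ps Pz x z) / eta Ps Pz (u • x + v • y) z) • zeta Ps Pz x z +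
      ((v * eta Ps Pz y z) / eta Ps Pz (u • x + v • y) z) • zeta Ps Pz y z := by
  have hηx := eta_pos Ps Pz hPs0 hPs1 hPz0 hx z
  have hηy := eta_pos Ps Pz hPs0 hPs1 hPz0 hy z
  have hη := eta_pos Ps Pz hPs0 hPs1 hPz0
    (convex_simplex hx hy hu hv huv) z
  ext s'
  simp only [zeta, Pi.add_apply, Pi.smul_apply, smul_eq_mul]
  have hL : ∑ s, Ps s s' * (u * x s + v * y s) =
      u * ∑ s, Ps s s' * x s + v * ∑ s, Ps s s' * y s := by
    rw [Finset.mul_sum, Finset.mul_sum, ← Finset.sum_add_distrib]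
    congr 1; ext s; ring
  rw [hL]
  field_simp

lemma convexOn_fun_sum {ι : Type*} (t : Finset ι) (g : ι → (S → ℝ) → ℝ)
    (h : ∀ i ∈ t, ConvexOn ℝ (simplex S) (g i)) :
    ConvexOn ℝ (simplex S) (fun b => ∑ i ∈ t, g i b) := by
  classical
  induction t using Finset.induction with
  | empty => simpa using convexOn_const (0 : ℝ) convex_simplex
  | insert a s hni ih =>
    simp only [Finset.sum_insert hni]
    exact (h a (Finset.mem_insert_self a s)).add
      (ih fun i hi => h i (Finset.mem_insert_of_mem hi))

lemma perspective_convexOn (Ps : S → S → ℝ) (Pz : S → Z → ℝ)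
    (hPs0 : ∀ s s', 0 ≤ Ps s s') (hPs1 : ∀ s, ∑ s', Ps s s' = 1)
    (hPz0 : ∀ s' z, 0 < Pz s' z) (z : Z) {f : (S → ℝ) → ℝ}
    (hf : ConvexOn ℝ (simplex S) f) :
    ConvexOn ℝ (simplex S) (fun b => eta Ps Pz b z * f (zeta Ps Pz b z)) := by
  refine ⟨convex_simplex, ?_⟩
  intro x hx y hy u v hu hv huv
  have hηx := eta_pos Ps Pz hPs0 hPs1 hPz0 hx z
  have hηy := eta_pos Ps Pz hPs0 hPs1 hPz0 hy z
  have hη := eta_pos Ps Pz hPs0 hPs1 hPz0 (convex_simplex hx hy hu hv huv) z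
  have hlin := eta_smul_add Ps Pz x y u v z
  have hw1 : 0 ≤ u * eta Ps Pz x z / eta Ps Pz (u • x + v • y) z :=
    div_nonneg (mul_nonneg hu hηx.le) hη.le
  have hw2 : 0 ≤ v * eta Ps Pz y z / eta Ps Pz (u • x + v • y) z :=
    div_nonneg (mul_nonneg hv hηy.le) hη.le
  have hwsum : u * eta Ps Pz x z / eta Ps Pz (u • x + v • y) z +
      v * eta Ps Pz y z / eta Ps Pz (u • x + v • y) z = 1 := by
    rw [← add_div, div_eq_one_iff_eq hη.ne', hlin]
  have key := hf.2 (zeta_mem Ps Pz hPs0 hPs1 hPz0 hx z)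
    (zeta_mem Ps Pz hPs0 hPs1 hPz0 hy z) hw1 hw2 hwsum
  rw [← zeta_comb Ps Pz hPs0 hPs1 hPz0 hx hy hu hv huv z] at key
  have := mul_le_mul_of_nonneg_left key hη.le
  simp only [smul_eq_mul] at this ⊢
  calc eta Ps Pz (u • x + v • y) z * f (zeta Ps Pz (u • x + v • y) z)
      ≤ eta Ps Pz (u • x + v • y) z *
        (u * eta Ps Pz x z / eta Ps Pz (u • x + v • y) z * f (zeta Ps Pz x z) +
         v * eta Ps Pz y z / eta Ps Pz (u • x + v • y) z * f (zeta Ps Pz y z)) := this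
    _ = u * (eta Ps Pz x z * f (zeta Ps Pz x z)) +
        v * (eta Ps Pz y z * f (zeta Ps Pz y z)) := by
        field_simp

end helpers
/-- **Theorem 1.** If the final reward `ρT` is convex on `Δ(S)` and each per-step reward
`b ↦ ρ t b a` is convex on `Δ(S)`, then the value function of any finite-horizon policy
graph is convex in the belief: `V_T = ρT` is convex on `Δ(S)`, and for every `t < T`
and every node `q : Q t`, the function `b ↦ V t b q` is convex on `Δ(S)`. -/
theorem value_function_convexOn
    {S Z A : Type*} [Fintype S] [Fintype Z] [Fintype A]
    [Nonempty S] [Nonempty Z] [Nonempty A]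
    (Ps : A → S → S → ℝ) (Pz : A → S → Z → ℝ)
    (hPs0 : ∀ a s s', 0 ≤ Ps a s s') (hPs1 : ∀ a s, ∑ s', Ps a s s' = 1)
    (hPz0 : ∀ a s' z, 0 < Pz a s' z) (hPz1 : ∀ a s', ∑ z, Pz a s' z = 1)
    (T : ℕ) (hT : 1 ≤ T)
    (Q : ℕ → Type) [∀ t, Nonempty (Q t)]
    (γ : ∀ t, Q t → A) (lam : ∀ t, Q t → Z → Q (t + 1))
    (ρ : ℕ → (S → ℝ) → A → ℝ) (ρT : (S → ℝ) → ℝ)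
    (hρT : ConvexOn ℝ (simplex S) ρT)
    (hρ : ∀ t < T, ∀ a : A, ConvexOn ℝ (simplex S) (fun b => ρ t b a))
    (V : ∀ t, (S → ℝ) → Q t → ℝ)
    (hVlast : ∀ (b : S → ℝ) (q : Q (T - 1)),
      V (T - 1) b q = ρ (T - 1) b (γ (T - 1) q) +
        ∑ z, eta (Ps (γ (T - 1) q)) (Pz (γ (T - 1) q)) b z *
          ρT (zeta (Ps (γ (T - 1) q)) (Pz (γ (T - 1) q)) b z))
    (hVstep : ∀ t, t < T - 1 → ∀ (b : S → ℝ) (q : Q t),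
      V t b q = ρ t b (γ t q) +
        ∑ z, eta (Ps (γ t q)) (Pz (γ t q)) b z *
          V (t + 1) (zeta (Ps (γ t q)) (Pz (γ t q)) b z) (lam t q z)) :
    ConvexOn ℝ (simplex S) ρT ∧
      ∀ t < T, ∀ q : Q t, ConvexOn ℝ (simplex S) (fun b => V t b q) := by
  refine ⟨hρT, ?_⟩
  have main : ∀ n t, T - 1 - t = n → t < T → ∀ q : Q t,
      ConvexOn ℝ (simplex S) (fun b => V t b q) := by
    intro n
    induction n with
    | zero =>
      intro t hn ht q
      have htt : t = T - 1 := by omega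
      subst htt
      have heq : (fun b => V (T - 1) b q) =
          fun b => ρ (T - 1) b (γ (T - 1) q) +
            ∑ z, eta (Ps (γ (T - 1) q)) (Pz (γ (T - 1) q)) b z *
              ρT (zeta (Ps (γ (T - 1) q)) (Pz (γ (T - 1) q)) b z) :=
        funext fun b => hVlast b q
      rw [heq]
      exact (hρ (T - 1) ht (γ (T - 1) q)).add
        (convexOn_fun_sum Finset.univ _ fun z _ =>
          perspective_convexOn _ _ (hPs0 _) (hPs1 _) (hPz0 _) z hρT)
    | succ n ih =>
      intro t hn ht q
      have ht1 : t < T - 1 := by omega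
      have heq : (fun b => V t b q) =
          fun b => ρ t b (γ t q) +
            ∑ z, eta (Ps (γ t q)) (Pz (γ t q)) b z *
              V (t + 1) (zeta (Ps (γ t q)) (Pz (γ t q)) b z) (lam t q z) :=
        funext fun b => hVstep t ht1 b q
      rw [heq]
      exact (hρ t ht (γ t q)).add
        (convexOn_fun_sum Finset.univ _ fun z _ =>
          perspective_convexOn _ _ (hPs0 _) (hPs1 _) (hPz0 _) z
            (ih (t + 1) (by omega) (by omega) (lam t q z)))
  exact fun t ht q => main (T - 1 - t) t rfl ht q
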